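/- The functional equation 1 = Σ_{j=0}^∞ p^{j(q^j−1)} T^{(q^j−1)/(q−1)} u(p^{j(q−1)} T)^{q^j} admits a unique solution u ∈ 1 + Tℤ[[T]], and the solution Ψ_q of the equation Σ_{j≥0} p^{−j} Ψ(p^j T)^{q^j} = T satisfies Ψ_q(T) = T · u(T^{q−1}). -/

import Mathlib

open PowerSeries

/-- `Ψ ∈ T + T²ℤ[[T]]` satisfies `∑_{j≥0} p^{-j} Ψ(p^j T)^{q^j} = T` (coefficientwise). -/
def IsPsi (p q : ℕ) (Ψ : PowerSeries ℤ) : Prop :=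
  PowerSeries.constantCoeff Ψ = 0 ∧ PowerSeries.coeff 1 Ψ = 1 ∧
  ∀ n : ℕ,
    (∑ j ∈ Finset.range (n + 1),
      ((p : ℚ) ^ j)⁻¹ *
        PowerSeries.coeff n
          ((PowerSeries.rescale ((p : ℚ) ^ j) (Ψ.map (Int.castRingHom ℚ))) ^ (q ^ j)))
      = PowerSeries.coeff n (PowerSeries.X : PowerSeries ℚ)

/-- `u ∈ 1 + Tℤ[[T]]` satisfies
`1 = ∑_{j≥0} p^{j(q^j-1)} T^{(q^j-1)/(q-1)} u(p^{j(q-1)} T)^{q^j}`, read coefficientwise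
(only terms with `(q^j-1)/(q-1) ≤ n` contribute to the `n`-th coefficient, and
`(q^j-1)/(q-1) ≥ j`, so the sum over `j ∈ range (n+1)` is the full sum). -/
def IsU (p q : ℕ) (u : PowerSeries ℤ) : Prop :=
  PowerSeries.constantCoeff u = 1 ∧
  ∀ n : ℕ,
    (∑ j ∈ Finset.range (n + 1),
      (p : ℤ) ^ (j * (q ^ j - 1)) *
        PowerSeries.coeff n
          (PowerSeries.X ^ ((q ^ j - 1) / (q - 1)) *
            (PowerSeries.rescale ((p : ℤ) ^ (j * (q - 1))) u) ^ (q ^ j)))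
      = PowerSeries.coeff n (1 : PowerSeries ℤ)

open Finset

section Helpers

variable {R S : Type*} [CommRing R] [CommRing S]

lemma coeff_pow_congr {v v' : R⟦X⟧} {d : ℕ} (h : ∀ i ≤ d, coeff i v = coeff i v')
    (N : ℕ) : ∀ m ≤ d, coeff m (v ^ N) = coeff m (v' ^ N) := by
  induction N with
  | zero => intro m _; rfl
  | succ N ih =>
    intro m hm
    rw [pow_succ, pow_succ, coeff_mul, coeff_mul]
    apply Finset.sum_congr rfl
    rintro ⟨a, b⟩ hab
    rw [Finset.HasAntidiagonal.mem_antidiagonal] at hab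
    rw [ih a (by omega), h b (by omega)]

lemma coeff_pow_congr_of_lt {v v' : R⟦X⟧} {n : ℕ} (hv : constantCoeff v = 0)
    (hv' : constantCoeff v' = 0) (h : ∀ i < n, coeff i v = coeff i v')
    {N : ℕ} (hN : 2 ≤ N) : coeff n (v ^ N) = coeff n (v' ^ N) := by
  have key : coeff n (v ^ N) - coeff n (v' ^ N)
      = coeff n ((∑ i ∈ range N, v ^ i * v' ^ (N - 1 - i)) * (v - v')) := by
    rw [geom_sum₂_mul, map_sub]
  have hz : coeff n ((∑ i ∈ range N, v ^ i * v' ^ (N - 1 - i)) * (v - v')) = 0 := by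
    rw [coeff_mul]
    apply Finset.sum_eq_zero
    rintro ⟨a, b⟩ hab
    rw [Finset.HasAntidiagonal.mem_antidiagonal] at hab
    rcases lt_or_ge b n with hb | hb
    · rw [map_sub, h b hb, sub_self, mul_zero]
    · have hbn : b = n := by omega
      have ha : a = 0 := by omega
      subst ha; subst hbn
      have : coeff 0 (∑ i ∈ range N, v ^ i * v' ^ (N - 1 - i)) = 0 := by
        rw [map_sum]
        apply Finset.sum_eq_zero
        intro i _
        rw [coeff_zero_eq_constantCoeff, map_mul, map_pow, map_pow, hv, hv']
        rcases Nat.eq_zero_or_pos i with rfl | hi0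
        · rw [zero_pow (n := N - 1 - 0) (by omega), mul_zero]
        · rw [zero_pow hi0.ne', zero_mul]
      rw [this, zero_mul]
  exact sub_eq_zero.mp (key.trans hz)

noncomputable def stretch (r : ℕ) (w : R⟦X⟧) : R⟦X⟧ :=
  PowerSeries.mk fun m => if r ∣ m then coeff (m / r) w else 0

lemma coeff_stretch (r m : ℕ) (w : R⟦X⟧) :
    coeff m (stretch r w) = if r ∣ m then coeff (m / r) w else 0 := coeff_mk _ _

lemma stretch_one (r : ℕ) (hr : 0 < r) : stretch r (1 : R⟦X⟧) = 1 := by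
  ext m
  rw [coeff_stretch]
  split_ifs with hd
  · rw [coeff_one, coeff_one]
    have hiff : m / r = 0 ↔ m = 0 :=
      ⟨fun h0 => by rw [← Nat.div_mul_cancel hd, h0, zero_mul], fun h0 => by simp [h0]⟩
    simp only [hiff]
  · rw [coeff_one, if_neg (fun h0 => hd (by rw [h0]; exact dvd_zero r))]

lemma stretch_mul (r : ℕ) (hr : 0 < r) (a b : R⟦X⟧) :
    stretch r (a * b) = stretch r a * stretch r b := by
  ext m
  have key : ∀ x y : ℕ,
      coeff x (stretch r a) * coeff y (stretch r b)
        = if r ∣ x ∧ r ∣ y then coeff (x / r) a * coeff (y / r) b else 0 := by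
    intro x y
    rw [coeff_stretch, coeff_stretch]
    split_ifs with h1 h2 h2 <;> simp_all
  by_cases hd : r ∣ m
  · obtain ⟨m', rfl⟩ := hd
    rw [coeff_stretch, if_pos ⟨m', rfl⟩, Nat.mul_div_cancel_left _ hr, coeff_mul, coeff_mul]
    set e : ℕ × ℕ ↪ ℕ × ℕ :=
      ⟨fun z => (r * z.1, r * z.2), by
        rintro ⟨x, y⟩ ⟨x', y'⟩ h
        simp only [Prod.mk.injEq] at h
        exact Prod.ext (Nat.eq_of_mul_eq_mul_left hr h.1)
          (Nat.eq_of_mul_eq_mul_left hr h.2)⟩ with he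
    have hsub : (antidiagonal m').map e ⊆ antidiagonal (r * m') := by
      intro z hz
      rw [Finset.mem_map] at hz
      obtain ⟨⟨x, y⟩, hxy, rfl⟩ := hz
      rw [Finset.HasAntidiagonal.mem_antidiagonal] at hxy ⊢
      simp only [he, Function.Embedding.coeFn_mk]
      show r * x + r * y = r * m'
      rw [← Nat.mul_add, hxy]
    have hzero : ∀ z ∈ antidiagonal (r * m'), z ∉ (antidiagonal m').map e →
        coeff z.1 (stretch r a) * coeff z.2 (stretch r b) = 0 := by
      rintro ⟨x, y⟩ hxy hnot
      rw [Finset.HasAntidiagonal.mem_antidiagonal] at hxy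
      rw [key x y]
      split_ifs with hc
      · exfalso
        apply hnot
        rw [Finset.mem_map]
        obtain ⟨hcx, hcy⟩ := hc
        refine ⟨(x / r, y / r), ?_, ?_⟩
        · rw [Finset.HasAntidiagonal.mem_antidiagonal]
          apply Nat.eq_of_mul_eq_mul_left hr
          rw [Nat.mul_add, Nat.mul_div_cancel' hcx, Nat.mul_div_cancel' hcy, hxy]
        · simp only [he, Function.Embedding.coeFn_mk]
          show (r * (x / r), r * (y / r)) = (x, y)
          rw [Nat.mul_div_cancel' hcx, Nat.mul_div_cancel' hcy]
      · rfl
    rw [← Finset.sum_subset hsub hzero, Finset.sum_map]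
    apply Finset.sum_congr rfl
    rintro ⟨x, y⟩ hxy
    simp only [he, Function.Embedding.coeFn_mk]
    show coeff x a * coeff y b = coeff (r * x) (stretch r a) * coeff (r * y) (stretch r b)
    rw [key (r * x) (r * y), if_pos ⟨Dvd.intro _ rfl, Dvd.intro _ rfl⟩,
      Nat.mul_div_cancel_left _ hr, Nat.mul_div_cancel_left _ hr]
  · rw [coeff_stretch, if_neg hd, coeff_mul]
    symm
    apply Finset.sum_eq_zero
    rintro ⟨x, y⟩ hxy
    rw [Finset.HasAntidiagonal.mem_antidiagonal] at hxy
    rw [key x y, if_neg (fun hc => hd (hxy ▸ Nat.dvd_add hc.1 hc.2))]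

lemma stretch_pow (r : ℕ) (hr : 0 < r) (w : R⟦X⟧) (N : ℕ) :
    stretch r (w ^ N) = (stretch r w) ^ N := by
  induction N with
  | zero => simpa using stretch_one r hr
  | succ N ih => rw [pow_succ, stretch_mul r hr, ih, pow_succ]

lemma map_stretch (g : R →+* S) (r : ℕ) (w : R⟦X⟧) :
    map g (stretch r w) = stretch r (map g w) := by
  ext m
  rw [coeff_map, coeff_stretch, coeff_stretch, apply_ite g, map_zero, coeff_map]

lemma constantCoeff_X_mul_stretch (r : ℕ) (w : R⟦X⟧) :
    constantCoeff (X * stretch r w) = 0 := by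
  rw [← coeff_zero_eq_constantCoeff]
  have := PowerSeries.coeff_X_pow_mul' (stretch r w) 1 0
  simpa using this

lemma coeff_X_mul_stretch_pow (r : ℕ) (hr : 0 < r) (w : R⟦X⟧) (N n : ℕ) :
    coeff n ((X * stretch r w) ^ N)
      = if N ≤ n ∧ r ∣ (n - N) then coeff ((n - N) / r) (w ^ N) else 0 := by
  rw [mul_pow, ← stretch_pow r hr, PowerSeries.coeff_X_pow_mul']
  by_cases h1 : N ≤ n
  · rw [if_pos h1, coeff_stretch]
    by_cases h2 : r ∣ n - N
    · rw [if_pos h2, if_pos ⟨h1, h2⟩]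
    · rw [if_neg h2, if_neg (fun hc => h2 hc.2)]
  · rw [if_neg h1, if_neg (fun hc => h1 hc.1)]

end Helpers

lemma geom_nat (q : ℕ) (hq : 2 ≤ q) (j : ℕ) :
    (q - 1) * ∑ i ∈ range j, q ^ i = q ^ j - 1 := by
  induction j with
  | zero => simp
  | succ j ih =>
    rw [Finset.sum_range_succ, Nat.mul_add, ih, pow_succ]
    have h1 : 1 ≤ q ^ j := Nat.one_le_pow _ _ (by omega)
    have h2 : (q - 1) * q ^ j = q ^ j * q - q ^ j := by
      rw [Nat.sub_mul, one_mul, mul_comm q (q ^ j)]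
    have h3 : q ^ j ≤ q ^ j * q := Nat.le_mul_of_pos_right _ (by omega)
    omega

lemma mexp_eq_sum (q : ℕ) (hq : 2 ≤ q) (j : ℕ) :
    (q ^ j - 1) / (q - 1) = ∑ i ∈ range j, q ^ i := by
  rw [← geom_nat q hq, Nat.mul_div_cancel_left _ (by omega : 0 < q - 1)]

lemma mexp_key (q : ℕ) (hq : 2 ≤ q) (j : ℕ) :
    (q - 1) * ((q ^ j - 1) / (q - 1)) = q ^ j - 1 := by
  rw [mexp_eq_sum q hq, geom_nat q hq]

lemma le_mexp (q : ℕ) (hq : 2 ≤ q) (j : ℕ) : j ≤ (q ^ j - 1) / (q - 1) := by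
  rw [mexp_eq_sum q hq]
  calc j = ∑ _i ∈ range j, 1 := by simp
  _ ≤ ∑ i ∈ range j, q ^ i :=
    Finset.sum_le_sum fun i _ => Nat.one_le_pow _ _ (by omega)

noncomputable def ucoef (p q : ℕ) : ℕ → ℤ
  | n =>
    if n = 0 then 1
    else
      - ∑ j ∈ Finset.range n,
          (p : ℤ) ^ ((j + 1) * (q ^ (j + 1) - 1)) *
            PowerSeries.coeff n
              (PowerSeries.X ^ ((q ^ (j + 1) - 1) / (q - 1)) *
                (PowerSeries.rescale ((p : ℤ) ^ ((j + 1) * (q - 1)))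
                  (PowerSeries.mk fun i => if h : i < n then ucoef p q i else 0)) ^
                  (q ^ (j + 1)))
  termination_by n => n
  decreasing_by exact h

lemma term_congr {u1 u2 : ℤ⟦X⟧} {n : ℕ} (h : ∀ i < n, coeff i u1 = coeff i u2)
    {m : ℕ} (hm : 1 ≤ m) (c : ℤ) (N : ℕ) :
    coeff n (X ^ m * (rescale c u1) ^ N) = coeff n (X ^ m * (rescale c u2) ^ N) := by
  rw [PowerSeries.coeff_X_pow_mul', PowerSeries.coeff_X_pow_mul']
  split_ifs with h1
  · exact coeff_pow_congr
      (fun i hi => by rw [coeff_rescale, coeff_rescale, h i (by omega)]) N _ le_rfl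
  · rfl

section
variable (p q : ℕ)

noncomputable def uTerm (u : ℤ⟦X⟧) (n j : ℕ) : ℤ :=
  (p : ℤ) ^ (j * (q ^ j - 1)) *
    PowerSeries.coeff n
      (PowerSeries.X ^ ((q ^ j - 1) / (q - 1)) *
        (PowerSeries.rescale ((p : ℤ) ^ (j * (q - 1))) u) ^ (q ^ j))

lemma uTerm_zero (u : ℤ⟦X⟧) (n : ℕ) : uTerm p q u n 0 = coeff n u := by
  simp [uTerm, rescale_one]

lemma sum_split (u : ℤ⟦X⟧) (n : ℕ) :
    ∑ j ∈ range (n + 1), uTerm p q u n j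
      = coeff n u + ∑ j ∈ range n, uTerm p q u n (j + 1) := by
  rw [Finset.sum_range_succ', uTerm_zero, add_comm]
end

lemma isU_mk (p q : ℕ) (hq : 2 ≤ q) : IsU p q (PowerSeries.mk (ucoef p q)) := by
  constructor
  · rw [← coeff_zero_eq_constantCoeff, coeff_mk, ucoef]
    simp
  · intro n
    have hsum : ∀ n : ℕ, (∑ j ∈ Finset.range (n + 1),
        (p : ℤ) ^ (j * (q ^ j - 1)) *
          PowerSeries.coeff n
            (PowerSeries.X ^ ((q ^ j - 1) / (q - 1)) *
              (PowerSeries.rescale ((p : ℤ) ^ (j * (q - 1)))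
                (PowerSeries.mk (ucoef p q))) ^ (q ^ j)))
        = ∑ j ∈ range (n + 1), uTerm p q (PowerSeries.mk (ucoef p q)) n j := fun n => rfl
    rw [hsum, sum_split]
    rcases Nat.eq_zero_or_pos n with rfl | hn
    · simp [coeff_mk, ucoef]
    · rw [coeff_mk, PowerSeries.coeff_one, if_neg (by omega)]
      conv_lhs => rw [ucoef]
      rw [if_neg (by omega)]
      rw [neg_add_eq_zero]
      apply Finset.sum_congr rfl
      intro j _
      unfold uTerm
      congr 1
      apply term_congr
      · intro i hi
        rw [coeff_mk, coeff_mk, dif_pos hi]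
      · exact le_trans (by omega) (le_mexp q hq (j + 1))

lemma isU_unique (p q : ℕ) (hq : 2 ≤ q) (u1 u2 : ℤ⟦X⟧) (h1 : IsU p q u1)
    (h2 : IsU p q u2) : u1 = u2 := by
  ext n
  induction n using Nat.strong_induction_on with
  | _ n ih =>
    have e1 := h1.2 n
    have e2 := h2.2 n
    have r1 : (∑ j ∈ Finset.range (n + 1),
        (p : ℤ) ^ (j * (q ^ j - 1)) *
          PowerSeries.coeff n
            (PowerSeries.X ^ ((q ^ j - 1) / (q - 1)) *
              (PowerSeries.rescale ((p : ℤ) ^ (j * (q - 1))) u1) ^ (q ^ j)))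
        = ∑ j ∈ range (n + 1), uTerm p q u1 n j := rfl
    have r2 : (∑ j ∈ Finset.range (n + 1),
        (p : ℤ) ^ (j * (q ^ j - 1)) *
          PowerSeries.coeff n
            (PowerSeries.X ^ ((q ^ j - 1) / (q - 1)) *
              (PowerSeries.rescale ((p : ℤ) ^ (j * (q - 1))) u2) ^ (q ^ j)))
        = ∑ j ∈ range (n + 1), uTerm p q u2 n j := rfl
    rw [r1, sum_split] at e1
    rw [r2, sum_split] at e2
    have hrest : ∑ j ∈ range n, uTerm p q u1 n (j + 1)
        = ∑ j ∈ range n, uTerm p q u2 n (j + 1) := by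
      apply Finset.sum_congr rfl
      intro j _
      unfold uTerm
      congr 1
      exact term_congr ih (le_trans (by omega) (le_mexp q hq (j + 1))) _ _
    omega

lemma psiEq_of_isU (p q : ℕ) (hp : 2 ≤ p) (hq : 2 ≤ q) (u : ℤ⟦X⟧) (hu : IsU p q u)
    (n : ℕ) :
    ∑ j ∈ Finset.range (n + 1),
      ((p : ℚ) ^ j)⁻¹ *
        PowerSeries.coeff n
          ((PowerSeries.rescale ((p : ℚ) ^ j)
            ((X * stretch (q - 1) u).map (Int.castRingHom ℚ))) ^ (q ^ j))
      = PowerSeries.coeff n (PowerSeries.X : PowerSeries ℚ) := by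
  have hr : 0 < q - 1 := by omega
  have hpQ : ∀ j : ℕ, ((p : ℚ) ^ j) ≠ 0 := fun j => pow_ne_zero _ (by positivity)
  set uQ : ℚ⟦X⟧ := u.map (Int.castRingHom ℚ) with huQ
  have hmap : (X * stretch (q - 1) u).map (Int.castRingHom ℚ) = X * stretch (q - 1) uQ := by
    rw [map_mul, PowerSeries.map_X, map_stretch]
  -- simplify each term of LHS
  have hterm : ∀ j : ℕ,
      ((p : ℚ) ^ j)⁻¹ *
        PowerSeries.coeff n
          ((PowerSeries.rescale ((p : ℚ) ^ j)
            ((X * stretch (q - 1) u).map (Int.castRingHom ℚ))) ^ (q ^ j))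
      = ((p : ℚ) ^ j)⁻¹ * (((p : ℚ) ^ j) ^ n *
          (if q ^ j ≤ n ∧ (q - 1) ∣ (n - q ^ j) then
            PowerSeries.coeff ((n - q ^ j) / (q - 1)) (uQ ^ (q ^ j)) else 0)) := by
    intro j
    rw [hmap, ← map_pow, coeff_rescale, coeff_X_mul_stretch_pow _ hr]
  simp only [hterm]
  rcases Nat.eq_zero_or_pos n with rfl | hn
  · rw [Finset.sum_eq_zero, coeff_zero_eq_constantCoeff]
    · simp
    · intro j _
      rw [if_neg, mul_zero, mul_zero]
      rintro ⟨hle, -⟩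
      exact absurd hle (by have := Nat.one_le_pow j q (by omega); omega)
  by_cases hdvd : (q - 1) ∣ (n - 1)
  · -- n = 1 + k * (q-1)
    obtain ⟨k, hk⟩ := hdvd
    have hkn : n = 1 + (q - 1) * k := by omega
    have hkle : k ≤ n := by nlinarith [Nat.le_mul_of_pos_left k hr]
    -- the integral equation at k, transformed
    have hZ : ∑ j ∈ Finset.range (n + 1),
        (if (q ^ j - 1) / (q - 1) ≤ k then
          (p : ℤ) ^ (j * ((q - 1) * k)) *
            PowerSeries.coeff (k - (q ^ j - 1) / (q - 1)) (u ^ (q ^ j)) else 0)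
        = if k = 0 then 1 else 0 := by
      have e := hu.2 k
      rw [PowerSeries.coeff_one] at e
      rw [← e]
      rw [← Finset.sum_subset (Finset.range_subset_range.mpr (by omega : k + 1 ≤ n + 1))]
      · apply Finset.sum_congr rfl
        intro j _
        rw [PowerSeries.coeff_X_pow_mul', ← map_pow, coeff_rescale]
        by_cases hmk : (q ^ j - 1) / (q - 1) ≤ k
        · rw [if_pos hmk, if_pos hmk, ← pow_mul, ← mul_assoc ((p:ℤ) ^ (j * (q ^ j - 1))), ← pow_add]
          have h1 := mexp_key q hq j
          have h2 : (q - 1) * ((q ^ j - 1) / (q - 1)) + (q - 1) * (k - (q ^ j - 1) / (q - 1))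
              = (q - 1) * k := by
            rw [← Nat.mul_add, Nat.add_sub_cancel' hmk]
          have hE : j * (q ^ j - 1) + j * (q - 1) * (k - (q ^ j - 1) / (q - 1))
              = j * ((q - 1) * k) := by
            calc j * (q ^ j - 1) + j * (q - 1) * (k - (q ^ j - 1) / (q - 1))
                = j * ((q - 1) * ((q ^ j - 1) / (q - 1))
                    + (q - 1) * (k - (q ^ j - 1) / (q - 1))) := by rw [h1]; ring
              _ = j * ((q - 1) * k) := by rw [h2]
          rw [hE]
        · rw [if_neg hmk, if_neg hmk, mul_zero]
      · intro j hj hj'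
        rw [if_neg]
        intro hmk
        have : j ≤ (q ^ j - 1) / (q - 1) := le_mexp q hq j
        simp only [Finset.mem_range] at hj hj'
        omega
    -- compare the ℚ-sum with the cast of hZ
    have hcast := congrArg (fun z : ℤ => (z : ℚ)) hZ
    simp only [Int.cast_sum, Int.cast_ite, Int.cast_mul, Int.cast_pow, Int.cast_natCast,
      Int.cast_one, Int.cast_zero, apply_ite (fun z : ℤ => (z : ℚ))] at hcast
    rw [PowerSeries.coeff_X]
    have hRHS : (if n = 1 then (1:ℚ) else 0) = (if k = 0 then (1:ℚ) else 0) := by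
      rcases Nat.eq_zero_or_pos k with rfl | hkpos
      · simp [hkn]
      · have h1 : 1 ≤ (q - 1) * k := Nat.mul_pos hr hkpos
        rw [if_neg (by omega), if_neg (by omega)]
    rw [hRHS, ← hcast]
    apply Finset.sum_congr rfl
    intro j _
    have hiff : (q ^ j ≤ n ∧ (q - 1) ∣ (n - q ^ j)) ↔ ((q ^ j - 1) / (q - 1) ≤ k) := by
      have h1 := mexp_key q hq j
      have hq1 : 1 ≤ q ^ j := Nat.one_le_pow _ _ (by omega)
      constructor
      · rintro ⟨hle, -⟩
        apply Nat.le_of_mul_le_mul_left _ hr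
        omega
      · intro hmk
        have h2 : (q - 1) * ((q ^ j - 1) / (q - 1)) ≤ (q - 1) * k :=
          Nat.mul_le_mul_left _ hmk
        constructor
        · omega
        · refine ⟨k - (q ^ j - 1) / (q - 1), ?_⟩
          rw [Nat.mul_sub, h1]
          omega
    by_cases hc : (q ^ j - 1) / (q - 1) ≤ k
    · rw [if_pos (hiff.mpr hc), if_pos hc]
      have hdiv : (n - q ^ j) / (q - 1) = k - (q ^ j - 1) / (q - 1) := by
        have h1 := mexp_key q hq j
        have hq1 : 1 ≤ q ^ j := Nat.one_le_pow _ _ (by omega)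
        have h3 : n - q ^ j = (q - 1) * (k - (q ^ j - 1) / (q - 1)) := by
          rw [Nat.mul_sub, h1]; omega
        rw [h3, Nat.mul_div_cancel_left _ hr]
      rw [hdiv]
      have hcoeff : ((PowerSeries.coeff (k - (q ^ j - 1) / (q - 1)) (u ^ (q ^ j)) : ℤ) : ℚ)
          = PowerSeries.coeff (k - (q ^ j - 1) / (q - 1)) (uQ ^ (q ^ j)) := by
        rw [huQ, ← map_pow, coeff_map]
        rfl
      rw [← hcoeff]
      have hexp : ((p : ℚ) ^ j)⁻¹ * ((p : ℚ) ^ j) ^ n = (p : ℚ) ^ (j * ((q - 1) * k)) := by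
        have hEE : j * n = j + j * ((q - 1) * k) := by
          rw [hkn, mul_add, mul_one]
        rw [← pow_mul, hEE, pow_add, ← mul_assoc,
          inv_mul_cancel₀ (hpQ j), one_mul]
      rw [← mul_assoc, hexp]
    · rw [if_neg (fun hx => hc (hiff.mp hx)), if_neg hc, mul_zero, mul_zero]
  · -- no term contributes, RHS is 0
    rw [Finset.sum_eq_zero, PowerSeries.coeff_X, if_neg (by rintro rfl; exact hdvd ⟨0, rfl⟩)]
    intro j _
    rw [if_neg, mul_zero, mul_zero]
    rintro ⟨hle, hd⟩
    apply hdvd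
    have h1 := mexp_key q hq j
    have hq1 : 1 ≤ q ^ j := Nat.one_le_pow _ _ (by omega)
    obtain ⟨t, ht⟩ := hd
    refine ⟨(q ^ j - 1) / (q - 1) + t, ?_⟩
    rw [Nat.mul_add, h1]
    omega

lemma psi_unique (p q : ℕ) (hp : 2 ≤ p) (hq : 2 ≤ q) (Ψ Ψ' : ℤ⟦X⟧)
    (h0 : PowerSeries.constantCoeff Ψ = 0) (h0' : PowerSeries.constantCoeff Ψ' = 0)
    (hE : ∀ n : ℕ, (∑ j ∈ Finset.range (n + 1),
      ((p : ℚ) ^ j)⁻¹ *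
        PowerSeries.coeff n
          ((PowerSeries.rescale ((p : ℚ) ^ j) (Ψ.map (Int.castRingHom ℚ))) ^ (q ^ j)))
      = PowerSeries.coeff n (PowerSeries.X : PowerSeries ℚ))
    (hE' : ∀ n : ℕ, (∑ j ∈ Finset.range (n + 1),
      ((p : ℚ) ^ j)⁻¹ *
        PowerSeries.coeff n
          ((PowerSeries.rescale ((p : ℚ) ^ j) (Ψ'.map (Int.castRingHom ℚ))) ^ (q ^ j)))
      = PowerSeries.coeff n (PowerSeries.X : PowerSeries ℚ)) :
    ∀ m : ℕ, PowerSeries.coeff m Ψ = PowerSeries.coeff m Ψ' := by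
  set Φ := Ψ.map (Int.castRingHom ℚ) with hΦ
  set Φ' := Ψ'.map (Int.castRingHom ℚ) with hΦ'
  have hc0 : constantCoeff Φ = 0 := by
    rw [hΦ, ← coeff_zero_eq_constantCoeff, coeff_map, coeff_zero_eq_constantCoeff, h0]; simp
  have hc0' : constantCoeff Φ' = 0 := by
    rw [hΦ', ← coeff_zero_eq_constantCoeff, coeff_map, coeff_zero_eq_constantCoeff, h0']; simp
  have key : ∀ m : ℕ, coeff m Φ = coeff m Φ' := by
    intro m
    induction m using Nat.strong_induction_on with
    | _ n ih =>
      have e1 := hE n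
      have e2 := hE' n
      rw [Finset.sum_range_succ'] at e1 e2
      have hz : ∀ j : ℕ,
          ((p : ℚ) ^ (j + 1))⁻¹ *
            PowerSeries.coeff n ((PowerSeries.rescale ((p : ℚ) ^ (j + 1)) Φ) ^ (q ^ (j + 1)))
          = ((p : ℚ) ^ (j + 1))⁻¹ *
            PowerSeries.coeff n
              ((PowerSeries.rescale ((p : ℚ) ^ (j + 1)) Φ') ^ (q ^ (j + 1))) := by
        intro j
        congr 1
        apply coeff_pow_congr_of_lt
        · rw [← coeff_zero_eq_constantCoeff, coeff_rescale, pow_zero, one_mul,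
            coeff_zero_eq_constantCoeff, hc0]
        · rw [← coeff_zero_eq_constantCoeff, coeff_rescale, pow_zero, one_mul,
            coeff_zero_eq_constantCoeff, hc0']
        · intro i hi
          rw [coeff_rescale, coeff_rescale, ih i hi]
        · calc 2 ≤ q := hq
            _ = q ^ 1 := (pow_one q).symm
            _ ≤ q ^ (j + 1) := Nat.pow_le_pow_right (by omega) (by omega)
      simp only [hz] at e1
      have hj0 : ∀ (W : ℚ⟦X⟧),
          ((p : ℚ) ^ 0)⁻¹ *
            PowerSeries.coeff n ((PowerSeries.rescale ((p : ℚ) ^ 0) W) ^ (q ^ 0)) =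
          coeff n W := by
        intro W
        rw [pow_zero, pow_zero, pow_one, rescale_one]
        simp
      rw [hj0] at e1 e2
      linarith [e1, e2]
  intro m
  have := key m
  rw [hΦ, hΦ', coeff_map, coeff_map] at this
  simp only [eq_intCast, Int.cast_inj] at this
  exact this

/-- the functional equation for `u` has a unique solution in `1 + Tℤ[[T]]`,
and the solution `Ψ_q` of the equation for `Ψ` satisfies `Ψ_q(T) = T·u(T^{q-1})`, i.e.
`coeff (1 + k(q-1)) Ψ_q = coeff k u` and all other coefficients of `Ψ_q` vanish. -/
theorem exists_unique_u_and_psi_eq (p f : ℕ) (hp : p.Prime) (hf : 0 < f)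
    (q : ℕ) (hq : q = p ^ f) :
    (∃! u : PowerSeries ℤ, IsU p q u) ∧
    (∀ u Ψ : PowerSeries ℤ, IsU p q u → IsPsi p q Ψ →
      (∀ k : ℕ, PowerSeries.coeff (1 + k * (q - 1)) Ψ = PowerSeries.coeff k u) ∧
      (∀ m : ℕ, (¬ ∃ k : ℕ, m = 1 + k * (q - 1)) → PowerSeries.coeff m Ψ = 0)) := by
  have hp2 : 2 ≤ p := hp.two_le
  have hq2 : 2 ≤ q := by
    rw [hq]
    calc 2 ≤ p := hp2
    _ = p ^ 1 := (pow_one p).symm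
    _ ≤ p ^ f := Nat.pow_le_pow_right (by omega) hf
  have hr : 0 < q - 1 := by omega
  constructor
  · exact ⟨PowerSeries.mk (ucoef p q), isU_mk p q hq2,
      fun y hy => isU_unique p q hq2 y _ hy (isU_mk p q hq2)⟩
  · intro u Ψ hu hΨ
    have hEq : ∀ m, PowerSeries.coeff m Ψ = PowerSeries.coeff m (X * stretch (q - 1) u) :=
      psi_unique p q hp2 hq2 Ψ (X * stretch (q - 1) u) hΨ.1
        (constantCoeff_X_mul_stretch _ _) hΨ.2.2
        (psiEq_of_isU p q hp2 hq2 u hu)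
    have hXpow : (X : ℤ⟦X⟧) * stretch (q - 1) u = X ^ 1 * stretch (q - 1) u := by
      rw [pow_one]
    constructor
    · intro k
      rw [hEq, hXpow, PowerSeries.coeff_X_pow_mul', if_pos (by omega), coeff_stretch]
      have h1 : 1 + k * (q - 1) - 1 = (q - 1) * k := by
        have := mul_comm k (q - 1)
        omega
      rw [h1, if_pos ⟨k, rfl⟩, Nat.mul_div_cancel_left _ hr]
    · intro m hm
      rw [hEq]
      rcases Nat.eq_zero_or_pos m with rfl | hm0
      · rw [coeff_zero_eq_constantCoeff]
        exact constantCoeff_X_mul_stretch _ _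
      · rw [hXpow, PowerSeries.coeff_X_pow_mul', if_pos (by omega), coeff_stretch, if_neg]
        rintro ⟨t, ht⟩
        refine hm ⟨t, ?_⟩
        have := mul_comm (q - 1) t
        omega
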